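/- Let ε > 0, r > 0, and for α ∈ (0,2] let k(α, ε, r) = (1/8)·(sup_{x ∈ (0, ε e^{-r}]} (ε e^{-r} - x)/(1 + (1/2)(4Lr/x)^{1/α}))², where L > 0 is a fixed constant. Then for each α, the function r ↦ k(α, ε, r) is strictly decreasing on (0,∞), lim_{r→0+} k(α, ε, r) = ε²/8, and lim_{r→∞} k(α, ε, r) = 0. -/

import Mathlib

noncomputable def kFun (L α ε r : ℝ) : ℝ :=
  (1/8) * (⨆ x : Set.Ioc (0:ℝ) (ε * Real.exp (-r)),
    (ε * Real.exp (-r) - (x : ℝ)) / (1 + (1/2) * (4 * L * r / (x : ℝ)) ^ (1/α)))^2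

namespace KFunAux

open Real Set Filter

noncomputable def M (ε r : ℝ) : ℝ := ε * Real.exp (-r)

noncomputable def d (L α r x : ℝ) : ℝ := 1 + (1/2) * (4 * L * r / x) ^ (1/α)

noncomputable def g (L α ε r x : ℝ) : ℝ := (M ε r - x) / d L α r x

noncomputable def f (L α ε r : ℝ) : ℝ := ⨆ x : Set.Ioc (0:ℝ) (M ε r), g L α ε r (x : ℝ)

lemma kFun_eq (L α ε r : ℝ) : kFun L α ε r = (1/8) * (f L α ε r)^2 := rfl

variable {L α ε : ℝ}

lemma M_pos (hε : 0 < ε) (r : ℝ) : 0 < M ε r := mul_pos hε (Real.exp_pos _)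

lemma one_le_d (hL : 0 < L) (hα : 0 < α) {r x : ℝ} (hr : 0 < r) (hx : 0 < x) :
    1 ≤ d L α r x := by
  have h0 : (0:ℝ) ≤ (4 * L * r / x) ^ (1/α) := Real.rpow_nonneg (by positivity) _
  unfold d; linarith

lemma d_pos (hL : 0 < L) (hα : 0 < α) {r x : ℝ} (hr : 0 < r) (hx : 0 < x) :
    0 < d L α r x := lt_of_lt_of_le one_pos (one_le_d hL hα hr hx)

lemma g_le (hL : 0 < L) (hα : 0 < α) {r x : ℝ} (hr : 0 < r)
    (hx : x ∈ Set.Ioc (0:ℝ) (M ε r)) : g L α ε r x ≤ M ε r - x :=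
  div_le_self (by linarith [hx.2]) (one_le_d hL hα hr hx.1)

lemma bddAbove_range (hL : 0 < L) (hα : 0 < α) {r : ℝ} (hr : 0 < r) :
    BddAbove (Set.range fun x : Set.Ioc (0:ℝ) (M ε r) => g L α ε r (x : ℝ)) := by
  refine ⟨M ε r, ?_⟩
  rintro _ ⟨⟨x, hx⟩, rfl⟩
  exact (g_le hL hα hr hx).trans (by linarith [hx.1])

lemma instNe (hε : 0 < ε) (r : ℝ) : Nonempty (Set.Ioc (0:ℝ) (M ε r)) :=
  Set.Nonempty.to_subtype (Set.nonempty_Ioc.2 (M_pos hε r))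

lemma le_f (hL : 0 < L) (hα : 0 < α) {r x : ℝ} (hr : 0 < r)
    (hx : x ∈ Set.Ioc (0:ℝ) (M ε r)) : g L α ε r x ≤ f L α ε r :=
  le_ciSup (bddAbove_range hL hα hr) (⟨x, hx⟩ : Set.Ioc (0:ℝ) (M ε r))

lemma f_le (hL : 0 < L) (hα : 0 < α) (hε : 0 < ε) {r : ℝ} (hr : 0 < r) :
    f L α ε r ≤ M ε r := by
  haveI := instNe hε r
  refine ciSup_le ?_
  rintro ⟨x, hx⟩
  exact (g_le hL hα hr hx).trans (by linarith [hx.1])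

lemma f_nonneg (hL : 0 < L) (hα : 0 < α) (hε : 0 < ε) {r : ℝ} (hr : 0 < r) :
    0 ≤ f L α ε r := by
  have h := le_f (x := M ε r) hL hα hr ⟨M_pos hε r, le_refl _⟩
  have : g L α ε r (M ε r) = 0 := by
    unfold g; simp
  linarith

-- monotonicity of the denominator in r and in 1/x
lemma d_mono_r (hL : 0 < L) (hα : 0 < α) {r₁ r₂ x : ℝ} (hr₁ : 0 < r₁) (h : r₁ ≤ r₂)
    (hx : 0 < x) : d L α r₁ x ≤ d L α r₂ x := by
  unfold d
  have h0 : (0:ℝ) ≤ 4*L*r₁/x := by positivity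
  have h1 : 4*L*r₁/x ≤ 4*L*r₂/x := div_le_div_of_nonneg_right (by nlinarith) hx.le
  have := Real.rpow_le_rpow (z := 1/α) h0 h1 (by positivity)
  nlinarith

lemma d_anti_x (hL : 0 < L) (hα : 0 < α) {r x₁ x₂ : ℝ} (hr : 0 < r) (hx₁ : 0 < x₁)
    (h : x₁ ≤ x₂) : d L α r x₂ ≤ d L α r x₁ := by
  unfold d
  have hx₂ : 0 < x₂ := hx₁.trans_le h
  have h0 : (0:ℝ) ≤ 4*L*r/x₂ := by positivity
  have hnum : (0:ℝ) ≤ 4*L*r := by positivity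
  have h1 : 4*L*r/x₂ ≤ 4*L*r/x₁ := div_le_div_of_nonneg_left hnum hx₁ h
  have := Real.rpow_le_rpow (z := 1/α) h0 h1 (by positivity)
  nlinarith

/-- main strict decrease of f -/
lemma f_strict (hL : 0 < L) (hα : 0 < α) (hε : 0 < ε) {r₁ r₂ : ℝ} (hr₁ : 0 < r₁)
    (h12 : r₁ < r₂) : f L α ε r₂ < f L α ε r₁ := by
  have hr₂ : 0 < r₂ := hr₁.trans h12
  set M₁ := M ε r₁ with hM₁def
  set M₂ := M ε r₂ with hM₂def
  have hM₁ : 0 < M₁ := M_pos hε r₁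
  have hM₂ : 0 < M₂ := M_pos hε r₂
  have hMlt : M₂ < M₁ := by
    unfold M₁ M₂
    unfold M
    exact mul_lt_mul_of_pos_left (Real.exp_lt_exp.2 (by linarith)) hε
  set v := g L α ε r₁ (M₂/2) with hvdef
  have hv : 0 < v := by
    unfold v; unfold g
    exact div_pos (by unfold M₁ at hMlt; linarith) (d_pos hL hα hr₁ (by linarith))
  have hvle : v ≤ f L α ε r₁ := le_f hL hα hr₁ ⟨by linarith, by unfold M₁ at hMlt; linarith⟩
  set x₀ := min M₂ (4*L*r₂ * (v/(4*M₂))^α) with hx₀def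
  have hx₀ : 0 < x₀ := lt_min hM₂ (by positivity)
  set D := d L α r₁ x₀ with hDdef
  have hD : 0 < D := d_pos hL hα hr₁ hx₀
  set δg := (M₁ - M₂)/D with hδdef
  have hδg : 0 < δg := div_pos (by linarith) hD
  set η := min δg (v/2) with hηdef
  have hη : 0 < η := lt_min hδg (by linarith)
  have key : ∀ x ∈ Set.Ioc (0:ℝ) M₂, g L α ε r₂ x ≤ f L α ε r₁ - η := by
    intro x hx
    rcases le_or_gt x x₀ with hcase | hcase
    · -- small x : g r₂ x ≤ v/2
      have hxpos := hx.1
      have hdpos := d_pos hL hα hr₂ hxpos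
      have ht : (0:ℝ) < (4*L*r₂/x) ^ (1/α) := Real.rpow_pos_of_pos (by positivity) _
      have h1 : g L α ε r₂ x ≤ M₂ / d L α r₂ x := by
        unfold g
        exact div_le_div_of_nonneg_right (by linarith [hx.2]) hdpos.le
      have h2 : M₂ / d L α r₂ x ≤ M₂ / ((1/2) * (4*L*r₂/x) ^ (1/α)) := by
        refine div_le_div_of_nonneg_left hM₂.le (by positivity) ?_
        unfold d; linarith
      have hlow : (4*M₂/v : ℝ) ≤ (4*L*r₂/x) ^ (1/α) := by
        have hxle : x ≤ 4*L*r₂ * (v/(4*M₂))^α := le_trans hcase (min_le_right _ _)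
        have hq : 4*L*r₂ / (4*L*r₂ * (v/(4*M₂))^α) = (4*M₂/v)^α := by
          rw [show (4*M₂/v : ℝ) = (v/(4*M₂))⁻¹ by rw [inv_div],
            Real.inv_rpow (by positivity), mul_comm (4*L*r₂)]
          rw [div_mul_eq_div_div, div_right_comm,
            div_self (by positivity : (4*L*r₂:ℝ) ≠ 0), one_div]
        have hmono : (4*M₂/v)^α ≤ 4*L*r₂/x := by
          rw [← hq]
          exact div_le_div_of_nonneg_left (by positivity) (by positivity) hxle
        calc (4*M₂/v : ℝ) = ((4*M₂/v)^α) ^ (1/α) := by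
              rw [one_div, Real.rpow_rpow_inv (by positivity) (ne_of_gt hα)]
          _ ≤ (4*L*r₂/x) ^ (1/α) :=
              Real.rpow_le_rpow (by positivity) hmono (by positivity)
      have h3 : M₂ / ((1/2) * (4*L*r₂/x) ^ (1/α)) ≤ v/2 := by
        have h4 : M₂ / ((1/2) * (4*L*r₂/x) ^ (1/α)) ≤ M₂ / ((1/2) * (4*M₂/v)) :=
          div_le_div_of_nonneg_left hM₂.le (by positivity) (by nlinarith)
        have h5 : M₂ / ((1/2) * (4*M₂/v)) = v/2 := by
          field_simp; ring
        linarith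
      have : g L α ε r₂ x ≤ v/2 := by linarith
      have hη2 : η ≤ v/2 := min_le_right _ _
      linarith
    · -- big x : compare with g r₁ x
      have hxpos := hx.1
      have hd1 : 0 < d L α r₁ x := d_pos hL hα hr₁ hxpos
      have hd12 : d L α r₁ x ≤ d L α r₂ x := d_mono_r hL hα hr₁ h12.le hxpos
      have h1 : g L α ε r₂ x ≤ (M₂ - x)/ d L α r₁ x := by
        unfold g
        exact div_le_div_of_nonneg_left (by linarith [hx.2]) hd1 hd12
      have h2 : (M₂ - x)/ d L α r₁ x = (M₁ - x)/ d L α r₁ x - (M₁ - M₂)/ d L α r₁ x := by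
        rw [div_sub_div_same]; ring_nf
      have h3 : (M₁ - M₂)/ d L α r₁ x ≥ δg := by
        unfold δg
        exact div_le_div_of_nonneg_left (by linarith) hd1
          (d_anti_x hL hα hr₁ hx₀ hcase.le)
      have h4 : (M₁ - x)/ d L α r₁ x ≤ f L α ε r₁ :=
        le_f hL hα hr₁ ⟨hxpos, by linarith [hx.2]⟩
      have hη1 : η ≤ δg := min_le_left _ _
      linarith
  haveI := instNe hε r₂
  have : f L α ε r₂ ≤ f L α ε r₁ - η := by
    refine ciSup_le ?_
    rintro ⟨x, hx⟩
    exact key x hx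
  linarith

lemma tendsto_f_zero (hL : 0 < L) (hα : 0 < α) (hε : 0 < ε) :
    Filter.Tendsto (f L α ε) (nhdsWithin 0 (Set.Ioi 0)) (nhds ε) := by
  rw [tendsto_order]
  constructor
  · intro a ha
    set δ := min ((ε - a)/2) (ε/2) with hδdef
    have hδpos : 0 < δ := lt_min (by linarith) (by linarith)
    have hδε : δ < ε := lt_of_le_of_lt (min_le_right _ _) (by linarith)
    have ha' : a < ε - δ := by
      have : δ ≤ (ε - a)/2 := min_le_left _ _
      linarith
    -- g r δ → ε - δ
    have hnum : Filter.Tendsto (fun r => ε * Real.exp (-r) - δ) (nhdsWithin 0 (Set.Ioi 0))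
        (nhds (ε - δ)) := by
      have : Filter.Tendsto (fun r : ℝ => ε * Real.exp (-r) - δ) (nhds 0) (nhds (ε - δ)) := by
        have h : Continuous fun r : ℝ => ε * Real.exp (-r) - δ := by continuity
        have := h.tendsto 0
        simpa using this
      exact this.mono_left nhdsWithin_le_nhds
    have hpow : Filter.Tendsto (fun r : ℝ => (4*L*r/δ) ^ (1/α)) (nhdsWithin 0 (Set.Ioi 0))
        (nhds 0) := by
      have hin : Filter.Tendsto (fun r : ℝ => 4*L*r/δ) (nhds 0) (nhds 0) := by
        have : Filter.Tendsto (fun r : ℝ => 4*L*r/δ) (nhds 0) (nhds (4*L*0/δ)) :=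
          ((continuous_const.mul continuous_id).div_const δ).tendsto 0
        simpa using this
      have hc : ContinuousAt (fun y : ℝ => y ^ (1/α)) 0 :=
        Real.continuousAt_rpow_const 0 (1/α) (Or.inr (by positivity))
      have hin' : Filter.Tendsto (fun r : ℝ => 4*L*r/δ) (nhdsWithin 0 (Set.Ioi 0)) (nhds 0) :=
        hin.mono_left nhdsWithin_le_nhds
      have := hc.tendsto.comp hin'
      simpa [Function.comp_def, Real.zero_rpow (by positivity : (α:ℝ)⁻¹ ≠ 0), one_div] using this
    have hg : Filter.Tendsto (fun r => g L α ε r δ) (nhdsWithin 0 (Set.Ioi 0))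
        (nhds (ε - δ)) := by
      have hden : Filter.Tendsto (fun r : ℝ => d L α r δ) (nhdsWithin 0 (Set.Ioi 0))
          (nhds 1) := by
        unfold d
        have := (tendsto_const_nhds (x := (1:ℝ))).add
          ((tendsto_const_nhds (x := (1:ℝ)/2)).mul hpow)
        simpa using this
      have := hnum.div hden one_ne_zero
      unfold g M
      simpa [Pi.div_def] using this
    have hev1 : ∀ᶠ r in nhdsWithin 0 (Set.Ioi 0), a < g L α ε r δ :=
      hg.eventually (eventually_gt_nhds ha')
    have hev2 : ∀ᶠ r in nhdsWithin 0 (Set.Ioi 0), δ ≤ M ε r := by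
      have hM : Filter.Tendsto (fun r : ℝ => M ε r) (nhdsWithin 0 (Set.Ioi 0)) (nhds ε) := by
        have : Filter.Tendsto (fun r : ℝ => ε * Real.exp (-r)) (nhds 0) (nhds ε) := by
          have h : Continuous fun r : ℝ => ε * Real.exp (-r) := by continuity
          have := h.tendsto 0
          simpa using this
        exact this.mono_left nhdsWithin_le_nhds
      exact hM.eventually (eventually_gt_nhds hδε) |>.mono fun r h => h.le
    have hev3 : ∀ᶠ r in nhdsWithin 0 (Set.Ioi 0), (0:ℝ) < r :=
      eventually_mem_nhdsWithin
    filter_upwards [hev1, hev2, hev3] with r h1 h2 h3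
    exact lt_of_lt_of_le h1 (le_f hL hα h3 ⟨hδpos, h2⟩)
  · intro b hb
    filter_upwards [eventually_mem_nhdsWithin (s := Set.Ioi (0:ℝ))] with r hr
    have h1 : f L α ε r ≤ M ε r := f_le hL hα hε hr
    have h2 : M ε r ≤ ε := by
      unfold M
      nlinarith [Real.exp_le_one_iff.2 (by simp [le_of_lt (Set.mem_Ioi.1 hr)] : -r ≤ 0), Real.exp_pos (-r)]
    linarith

end KFunAux

theorem kFun_monotone_limits (L ε α : ℝ) (hL : 0 < L) (hε : 0 < ε)
    (hα : α ∈ Set.Ioc (0:ℝ) 2) :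
    StrictAntiOn (fun r => kFun L α ε r) (Set.Ioi 0) ∧
    Filter.Tendsto (fun r => kFun L α ε r) (nhdsWithin 0 (Set.Ioi 0)) (nhds (ε^2 / 8)) ∧
    Filter.Tendsto (fun r => kFun L α ε r) Filter.atTop (nhds 0) := by
  obtain ⟨hα0, -⟩ := hα
  refine ⟨?_, ?_, ?_⟩
  · intro r₁ hr₁ r₂ hr₂ h12
    simp only [KFunAux.kFun_eq]
    have hlt := KFunAux.f_strict hL hα0 hε (Set.mem_Ioi.1 hr₁) h12
    have hnn := KFunAux.f_nonneg hL hα0 hε (L := L) (α := α) (Set.mem_Ioi.1 hr₂)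
    have := pow_lt_pow_left₀ hlt hnn (two_ne_zero)
    nlinarith
  · have h := KFunAux.tendsto_f_zero hL hα0 hε
    have := ((h.pow 2).const_mul (1/8 : ℝ))
    simp only [KFunAux.kFun_eq]
    convert this using 2
    ring
  · have hub : Filter.Tendsto (fun r : ℝ => (1/8) * (ε * Real.exp (-r))^2) Filter.atTop
        (nhds 0) := by
      have h := Real.tendsto_exp_neg_atTop_nhds_zero
      have := ((h.const_mul ε).pow 2).const_mul (1/8 : ℝ)
      simpa using this
    refine tendsto_of_tendsto_of_tendsto_of_le_of_le' tendsto_const_nhds hub ?_ ?_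
    · filter_upwards with r
      rw [KFunAux.kFun_eq]
      positivity
    · filter_upwards [Filter.eventually_gt_atTop (0:ℝ)] with r hr
      rw [KFunAux.kFun_eq]
      have h1 : KFunAux.f L α ε r ≤ ε * Real.exp (-r) := KFunAux.f_le hL hα0 hε hr
      have h2 : 0 ≤ KFunAux.f L α ε r := KFunAux.f_nonneg hL hα0 hε hr
      nlinarith
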